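/- Let f = Σ_μ f_μ e^μ be a nonzero element of the group algebra over ℚ of a lattice X, and define its Newton polytope deg(f) as the convex hull of {μ : f_μ ≠ 0} in X ⊗ ℚ. Then for nonzero f, g: deg(f·g) = deg(f) + deg(g) (Minkowski sum). -/

import Mathlib

open Pointwise

section Aux

variable {E : Type*} [AddCommGroup E] [Module ℚ E] [DecidableEq E]

/-- A point of a finite set that is not in the convex hull of the other points is an
extreme point of the convex hull. -/
lemma aux_essential_extreme (s : Finset E) {t : E} (hts : t ∈ s)
    (h : t ∉ convexHull ℚ ((s.erase t : Finset E) : Set E)) :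
    t ∈ (convexHull ℚ (s : Set E)).extremePoints ℚ := by
  classical
  rw [mem_extremePoints]
  refine ⟨subset_convexHull ℚ _ hts, ?_⟩
  rintro x₁ hx₁ x₂ hx₂ ⟨a, b, ha, hb, hab, habt⟩
  obtain ⟨w₁, hw₁0, hw₁s, hw₁⟩ := Finset.mem_convexHull'.1 hx₁
  obtain ⟨w₂, hw₂0, hw₂s, hw₂⟩ := Finset.mem_convexHull'.1 hx₂
  set c : E → ℚ := fun y => a * w₁ y + b * w₂ y with hc
  have hc0 : ∀ y ∈ s, 0 ≤ c y := fun y hy =>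
    add_nonneg (mul_nonneg ha.le (hw₁0 y hy)) (mul_nonneg hb.le (hw₂0 y hy))
  have hcs : ∑ y ∈ s, c y = 1 := by
    simp only [hc, Finset.sum_add_distrib, ← Finset.mul_sum, hw₁s, hw₂s, mul_one, hab]
  have hct : ∑ y ∈ s, c y • y = t := by
    simp only [hc, add_smul, mul_smul, Finset.sum_add_distrib, ← Finset.smul_sum, hw₁, hw₂]
    exact habt
  by_cases hct1 : c t = 1
  · -- all other weights vanish, so x₁ = x₂ = t
    have hrest : ∑ y ∈ s.erase t, c y = 0 := by
      have := Finset.sum_erase_add s c hts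
      rw [hct1] at this
      linarith [hcs, this]
    have hzero : ∀ y ∈ s.erase t, c y = 0 :=
      (Finset.sum_eq_zero_iff_of_nonneg fun y hy => hc0 y (Finset.mem_of_mem_erase hy)).1 hrest
    have hw₁zero : ∀ y ∈ s.erase t, w₁ y = 0 := by
      intro y hy
      have h1 : 0 ≤ a * w₁ y := mul_nonneg ha.le (hw₁0 y (Finset.mem_of_mem_erase hy))
      have h2 : 0 ≤ b * w₂ y := mul_nonneg hb.le (hw₂0 y (Finset.mem_of_mem_erase hy))
      have h3 : a * w₁ y + b * w₂ y = 0 := hzero y hy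
      have h4 : a * w₁ y = 0 := by linarith
      exact (mul_eq_zero.1 h4).resolve_left (ne_of_gt ha)
    have hw₂zero : ∀ y ∈ s.erase t, w₂ y = 0 := by
      intro y hy
      have h1 : 0 ≤ a * w₁ y := mul_nonneg ha.le (hw₁0 y (Finset.mem_of_mem_erase hy))
      have h2 : 0 ≤ b * w₂ y := mul_nonneg hb.le (hw₂0 y (Finset.mem_of_mem_erase hy))
      have h3 : a * w₁ y + b * w₂ y = 0 := hzero y hy
      have h4 : b * w₂ y = 0 := by linarith
      exact (mul_eq_zero.1 h4).resolve_left (ne_of_gt hb)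
    have hx₁t : x₁ = t := by
      have hsum := Finset.sum_erase_add s w₁ hts
      have hw₁t : w₁ t = 1 := by
        have h6 : ∑ y ∈ s.erase t, w₁ y = 0 := Finset.sum_eq_zero hw₁zero
        rw [h6] at hsum; linarith [hw₁s, hsum]
      calc x₁ = ∑ y ∈ s, w₁ y • y := hw₁.symm
        _ = ∑ y ∈ s.erase t, w₁ y • y + w₁ t • t := (Finset.sum_erase_add s _ hts).symm
        _ = 0 + (1 : ℚ) • t := by
            rw [Finset.sum_eq_zero (fun y hy => by rw [hw₁zero y hy, zero_smul]), hw₁t]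
        _ = t := by rw [zero_add, one_smul]
    have hx₂t : x₂ = t := by
      have hsum := Finset.sum_erase_add s w₂ hts
      have hw₂t : w₂ t = 1 := by
        have h6 : ∑ y ∈ s.erase t, w₂ y = 0 := Finset.sum_eq_zero hw₂zero
        rw [h6] at hsum; linarith [hw₂s, hsum]
      calc x₂ = ∑ y ∈ s, w₂ y • y := hw₂.symm
        _ = ∑ y ∈ s.erase t, w₂ y • y + w₂ t • t := (Finset.sum_erase_add s _ hts).symm
        _ = 0 + (1 : ℚ) • t := by
            rw [Finset.sum_eq_zero (fun y hy => by rw [hw₂zero y hy, zero_smul]), hw₂t]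
        _ = t := by rw [zero_add, one_smul]
    exact ⟨hx₁t, hx₂t⟩
  · -- c t < 1, so t is in the hull of the other points: contradiction
    exfalso
    apply h
    have hctle : c t ≤ 1 := by
      have := Finset.single_le_sum hc0 hts
      linarith [hcs]
    have hctlt : c t < 1 := lt_of_le_of_ne hctle hct1
    have hpos : (0:ℚ) < 1 - c t := by linarith
    refine Finset.mem_convexHull'.2 ⟨fun y => (1 - c t)⁻¹ * c y, ?_, ?_, ?_⟩
    · intro y hy
      exact mul_nonneg (inv_nonneg.2 hpos.le) (hc0 y (Finset.mem_of_mem_erase hy))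
    · rw [← Finset.mul_sum]
      have : ∑ y ∈ s.erase t, c y = 1 - c t := by
        have := Finset.sum_erase_add s c hts
        linarith [hcs, this]
      rw [this, inv_mul_cancel₀ (ne_of_gt hpos)]
    · have herase : ∑ y ∈ s.erase t, c y • y = t - c t • t := by
        have := Finset.sum_erase_add s (fun y => c y • y) hts
        rw [hct] at this
        exact eq_sub_of_add_eq this
      calc ∑ y ∈ s.erase t, ((1 - c t)⁻¹ * c y) • y
          = (1 - c t)⁻¹ • ∑ y ∈ s.erase t, c y • y := by
            rw [Finset.smul_sum]; congr 1; funext y; rw [mul_smul]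
        _ = (1 - c t)⁻¹ • ((1 - c t) • t) := by
            rw [herase, sub_smul, one_smul]
        _ = t := by rw [smul_smul, inv_mul_cancel₀ (ne_of_gt hpos), one_smul]

/-- Finite "Krein–Milman": the convex hull of a finite set is the convex hull of the
extreme points of that hull. -/
lemma aux_hull_subset_hull_extreme (s : Finset E) :
    convexHull ℚ (s : Set E) ⊆
      convexHull ℚ ((convexHull ℚ (s : Set E)).extremePoints ℚ) := by
  classical
  induction s using Finset.strongInduction with
  | _ s ih =>
    by_cases h : ∃ t ∈ s, t ∈ convexHull ℚ ((s.erase t : Finset E) : Set E)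
    · obtain ⟨t, hts, ht⟩ := h
      have he : convexHull ℚ (s : Set E) = convexHull ℚ ((s.erase t : Finset E) : Set E) := by
        apply Set.Subset.antisymm
        · apply convexHull_min ?_ (convex_convexHull ℚ _)
          intro x hx
          by_cases hxt : x = t
          · subst hxt; exact ht
          · exact subset_convexHull ℚ _
              (Finset.mem_coe.2 (Finset.mem_erase.2 ⟨hxt, Finset.mem_coe.1 hx⟩))
        · exact convexHull_mono (Finset.coe_subset.2 (Finset.erase_subset t s))
      rw [he]
      exact ih _ (Finset.erase_ssubset hts)
    · push_neg at h
      exact convexHull_mono fun t hts =>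
        aux_essential_extreme s (Finset.mem_coe.1 hts) (h t (Finset.mem_coe.1 hts))

/-- An extreme point of the convex hull of a Minkowski sum has a unique decomposition. -/
lemma aux_extreme_unique {A B : Set E} {v : E}
    (hv : v ∈ (convexHull ℚ (A + B)).extremePoints ℚ)
    {a a' b b' : E} (ha : a ∈ A) (hb : b ∈ B) (ha' : a' ∈ A) (hb' : b' ∈ B)
    (hab : a + b = v) (hab' : a' + b' = v) : a = a' ∧ b = b' := by
  obtain ⟨hvmem, hext⟩ := mem_extremePoints.1 hv
  have hx₁ : a + b' ∈ convexHull ℚ (A + B) := subset_convexHull ℚ _ (Set.add_mem_add ha hb')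
  have hx₂ : a' + b ∈ convexHull ℚ (A + B) := subset_convexHull ℚ _ (Set.add_mem_add ha' hb)
  have hsum : (a + b') + (a' + b) = v + v := by
    have h0 : (a + b') + (a' + b) = (a + b) + (a' + b') := by abel
    rw [h0, hab, hab']
  have hseg : v ∈ openSegment ℚ (a + b') (a' + b) := by
    refine ⟨1/2, 1/2, by norm_num, by norm_num, by norm_num, ?_⟩
    rw [← smul_add, hsum, ← two_smul ℚ v, smul_smul]
    norm_num
  obtain ⟨h₁, h₂⟩ := hext _ hx₁ _ hx₂ hseg
  -- a' + b = v = a + b  gives a' = a;  then b' = b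
  have haa : a = a' := by
    have : a' + b = a + b := by rw [h₂, ← hab]
    exact (add_right_cancel this).symm
  refine ⟨haa, ?_⟩
  have : a + b' = a + b := by rw [h₁, ← hab]
  exact (add_left_cancel this).symm

end Aux

/-- If a point of the sum of supports has a unique decomposition, it survives in the
support of the product. -/
lemma aux_mem_support_mul {G : Type*} [AddCommGroup G] [DecidableEq G]
    (f g : AddMonoidAlgebra ℚ G) {μ ν : G} (hμ : μ ∈ f.coeff.support) (hν : ν ∈ g.coeff.support)
    (huniq : ∀ μ' ∈ f.coeff.support, ∀ ν' ∈ g.coeff.support, μ' + ν' = μ + ν → μ' = μ ∧ ν' = ν) :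
    μ + ν ∈ (f * g).coeff.support := by
  rw [Finsupp.mem_support_iff, AddMonoidAlgebra.coeff_mul]
  simp only [Finsupp.sum]
  rw [Finset.sum_eq_single_of_mem μ hμ (fun a₁ ha₁ hne => Finset.sum_eq_zero fun a₂ ha₂ => by
    rw [if_neg]; intro hEq; exact hne (huniq a₁ ha₁ a₂ ha₂ hEq).1)]
  rw [Finset.sum_eq_single_of_mem ν hν (fun a₂ ha₂ hne => by
    rw [if_neg]; intro hEq; exact hne (huniq μ hμ a₂ ha₂ hEq).2)]
  rw [if_pos rfl]
  exact mul_ne_zero (Finsupp.mem_support_iff.1 hμ) (Finsupp.mem_support_iff.1 hν)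

open Pointwise in
/-- For nonzero elements `f, g` of the group algebra `ℚ[X]` of a
finitely generated free abelian group (lattice) `X = ℤ^d`, the Newton polytope
(convex hull in `X ⊗ ℚ = ℚ^d` of the support) is additive:
`deg(f·g) = deg(f) + deg(g)` (Minkowski sum). -/
theorem stmt17 (d : ℕ)
    (f g : AddMonoidAlgebra ℚ (Fin d → ℤ)) (hf : f ≠ 0) (hg : g ≠ 0) :
    convexHull ℚ ((fun (μ : Fin d → ℤ) => fun i => (μ i : ℚ)) '' ((f * g).coeff.support : Set (Fin d → ℤ)))
      = convexHull ℚ ((fun (μ : Fin d → ℤ) => fun i => (μ i : ℚ)) '' (f.coeff.support : Set (Fin d → ℤ)))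
        + convexHull ℚ ((fun (μ : Fin d → ℤ) => fun i => (μ i : ℚ)) '' (g.coeff.support : Set (Fin d → ℤ))) := by
  classical
  set ι : (Fin d → ℤ) → (Fin d → ℚ) := fun μ => fun i => (μ i : ℚ) with hιdef
  have hι_inj : Function.Injective ι := by
    intro μ ν h
    funext i
    exact Int.cast_injective (α := ℚ) (congrFun h i)
  have hι_add : ∀ μ ν, ι (μ + ν) = ι μ + ι ν := by
    intro μ ν
    funext i
    simp [hιdef]
  have himg : ∀ s t : Set (Fin d → ℤ), ι '' (s + t) = ι '' s + ι '' t := by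
    intro s t
    ext x
    constructor
    · rintro ⟨y, hy, rfl⟩
      rw [Set.mem_add] at hy
      obtain ⟨u, hu, w, hw, rfl⟩ := hy
      rw [hι_add]
      exact Set.add_mem_add ⟨u, hu, rfl⟩ ⟨w, hw, rfl⟩
    · rintro ⟨_, ⟨u, hu, rfl⟩, _, ⟨w, hw, rfl⟩, rfl⟩
      exact ⟨u + w, Set.add_mem_add hu hw, hι_add u w⟩
  have hcoe : ∀ s t : Finset (Fin d → ℤ),
      ((s + t : Finset (Fin d → ℤ)) : Set (Fin d → ℤ)) = (s : Set _) + (t : Set _) :=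
    fun s t => Finset.coe_add s t
  apply Set.Subset.antisymm
  · -- easy inclusion
    calc convexHull ℚ (ι '' ((f * g).coeff.support : Set (Fin d → ℤ)))
        ⊆ convexHull ℚ (ι '' (((f.coeff.support + g.coeff.support : Finset (Fin d → ℤ))) : Set (Fin d → ℤ))) :=
          convexHull_mono (Set.image_mono (by exact_mod_cast AddMonoidAlgebra.support_coeff_mul_subset f g))
      _ = convexHull ℚ (ι '' (f.coeff.support : Set (Fin d → ℤ)) + ι '' (g.coeff.support : Set (Fin d → ℤ))) := by
          rw [hcoe, himg]
      _ = convexHull ℚ (ι '' (f.coeff.support : Set (Fin d → ℤ)))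
            + convexHull ℚ (ι '' (g.coeff.support : Set (Fin d → ℤ))) := convexHull_add _ _
  · -- hard inclusion
    set A : Set (Fin d → ℚ) := ι '' (f.coeff.support : Set (Fin d → ℤ)) with hA
    set B : Set (Fin d → ℚ) := ι '' (g.coeff.support : Set (Fin d → ℤ)) with hB
    set T : Finset (Fin d → ℚ) := f.coeff.support.image ι + g.coeff.support.image ι with hT
    have hTcoe : (T : Set (Fin d → ℚ)) = A + B := by
      rw [hT, Finset.coe_add, Finset.coe_image, Finset.coe_image]
    have step1 : convexHull ℚ A + convexHull ℚ B = convexHull ℚ (T : Set (Fin d → ℚ)) := by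
      rw [hTcoe, convexHull_add]
    rw [step1]
    refine (aux_hull_subset_hull_extreme T).trans (convexHull_mono ?_)
    intro v hv
    have hvT : v ∈ (T : Set (Fin d → ℚ)) := extremePoints_convexHull_subset hv
    rw [hTcoe] at hvT
    rw [Set.mem_add] at hvT
    obtain ⟨x, hx, y, hy, hxy⟩ := hvT
    obtain ⟨μ, hμ, rfl⟩ := hx
    obtain ⟨ν, hν, rfl⟩ := hy
    have hvAB : v ∈ (convexHull ℚ (A + B)).extremePoints ℚ := by rwa [hTcoe] at hv
    have huniq : ∀ μ' ∈ f.coeff.support, ∀ ν' ∈ g.coeff.support, μ' + ν' = μ + ν → μ' = μ ∧ ν' = ν := by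
      intro μ' hμ' ν' hν' hEq
      have hv' : ι μ' + ι ν' = v := by rw [← hι_add, hEq, hι_add, hxy]
      obtain ⟨h1, h2⟩ := aux_extreme_unique hvAB
        (⟨μ', hμ', rfl⟩ : ι μ' ∈ A) (⟨ν', hν', rfl⟩ : ι ν' ∈ B)
        (⟨μ, hμ, rfl⟩ : ι μ ∈ A) (⟨ν, hν, rfl⟩ : ι ν ∈ B) hv' hxy
      exact ⟨hι_inj h1, hι_inj h2⟩
    have hmem : μ + ν ∈ (f * g).coeff.support :=
      aux_mem_support_mul f g (Finset.mem_coe.1 hμ) (Finset.mem_coe.1 hν) huniq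
    exact ⟨μ + ν, hmem, by rw [hι_add, hxy]⟩
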